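/- A matrix in the standard block form (\ref{normalform}) with nonnegative parameters a, b, c, a_p, b_p, c_{1p}, c_{2p} satisfying a - b = k, b + c = u, a_p = b_p + k/2, and c_{1p} = c_{2p} + k/2 (where n = a + b + 2c and u = (n-k)/2) is an n-by-n absolutely flat idempotent of rank 2 with constant 1/k. -/

import Mathlib

open Matrix

private lemma sumIco' (f : ℕ → ℝ) (p q : ℕ) (v : ℝ)
    (h : ∀ m, p ≤ m → m < q → f m = v) :
    ∑ m ∈ Finset.Ico p q, f m = ((q - p : ℕ) : ℝ) * v := by
  rw [Finset.sum_congr rfl (fun m hm => h m (Finset.mem_Ico.mp hm).1 (Finset.mem_Ico.mp hm).2),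
    Finset.sum_const, Nat.card_Ico, nsmul_eq_mul]

theorem stmt_16 (k a b c ap bp c1p c2p u n : ℕ)
    (hk : 0 < k) (hke : Even k)
    (hn : n = a + b + 2 * c) (hu : n = k + 2 * u)
    (hab : a = b + k) (hbc : b + c = u)
    (hap : ap = bp + k / 2) (hc1p : c1p = c2p + k / 2)
    (hapa : ap ≤ a) (hbpb : bp ≤ b) (hc1pc : c1p ≤ c) (hc2pc : c2p ≤ c)
    (A : Matrix (Fin n) (Fin n) ℝ)
    (hA : A = Matrix.of fun i j : Fin n =>
      (1 / k : ℝ) *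
        (if (j : ℕ) < a then 1
         else if (j : ℕ) < a + b then -1
         else
           (if (i : ℕ) < ap ∨ (a ≤ (i : ℕ) ∧ (i : ℕ) < a + bp) ∨
               (a + b ≤ (i : ℕ) ∧ (i : ℕ) < a + b + c1p) ∨
               (a + b + c ≤ (i : ℕ) ∧ (i : ℕ) < a + b + c + c2p)
            then 1 else -1) *
           (if (j : ℕ) < a + b + c then 1 else -1))) :
    A * A = A ∧ A.rank = 2 ∧ ∀ i j, A i j = 1 / k ∨ A i j = -(1 / k) := by
  obtain ⟨mk, hmk⟩ := hke
  have hK : ((k : ℝ)) ≠ 0 := Nat.cast_ne_zero.mpr hk.ne'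
  -- real cast facts
  have A1 : (ap : ℝ) = (bp : ℝ) + ((k / 2 : ℕ) : ℝ) := by exact_mod_cast hap
  have A2 : (a : ℝ) = (b : ℝ) + ((k / 2 : ℕ) : ℝ) + ((k / 2 : ℕ) : ℝ) := by
    have : a = b + k / 2 + k / 2 := by omega
    exact_mod_cast this
  have A3 : (c1p : ℝ) = (c2p : ℝ) + ((k / 2 : ℕ) : ℝ) := by exact_mod_cast hc1p
  have A4 : (k : ℝ) = ((k / 2 : ℕ) : ℝ) + ((k / 2 : ℕ) : ℝ) := by
    have : k = k / 2 + k / 2 := by omega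
    exact_mod_cast this
  -- the two key sums
  have S0 : ∀ r : ℝ, ∑ m ∈ Finset.range n,
      (if m < a then (1 : ℝ) else if m < a + b then -1
        else r * (if m < a + b + c then 1 else -1)) = (k : ℝ) := by
    intro r
    rw [Finset.range_eq_Ico,
      ← Finset.sum_Ico_consecutive _ (Nat.zero_le (a + b + c)) (by omega : a + b + c ≤ n),
      ← Finset.sum_Ico_consecutive _ (Nat.zero_le (a + b)) (by omega : a + b ≤ a + b + c),
      ← Finset.sum_Ico_consecutive _ (Nat.zero_le a) (by omega : a ≤ a + b),
      sumIco' _ 0 a 1 (fun m h1 h2 => by rw [if_pos h2]),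
      sumIco' _ a (a + b) (-1) (fun m h1 h2 => by rw [if_neg (by omega), if_pos h2]),
      sumIco' _ (a + b) (a + b + c) r
        (fun m h1 h2 => by rw [if_neg (by omega), if_neg (by omega), if_pos h2, mul_one]),
      sumIco' _ (a + b + c) n (r * (-1))
        (fun m h1 h2 => by rw [if_neg (by omega), if_neg (by omega), if_neg (by omega)]),
      show a - 0 = a from rfl, show a + b - a = b by omega,
      show a + b + c - (a + b) = c by omega, show n - (a + b + c) = c by omega]
    linear_combination A2 - A4
  have S1 : ∀ r : ℝ, ∑ m ∈ Finset.range n,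
      (if m < a then (1 : ℝ) else if m < a + b then -1
        else r * (if m < a + b + c then 1 else -1)) *
      (if m < ap ∨ (a ≤ m ∧ m < a + bp) ∨ (a + b ≤ m ∧ m < a + b + c1p) ∨
          (a + b + c ≤ m ∧ m < a + b + c + c2p) then (1 : ℝ) else -1)
      = r * (k : ℝ) := by
    intro r
    rw [Finset.range_eq_Ico,
      ← Finset.sum_Ico_consecutive _ (Nat.zero_le (a + b + c + c2p)) (by omega : a + b + c + c2p ≤ n),
      ← Finset.sum_Ico_consecutive _ (Nat.zero_le (a + b + c)) (by omega : a + b + c ≤ a + b + c + c2p),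
      ← Finset.sum_Ico_consecutive _ (Nat.zero_le (a + b + c1p)) (by omega : a + b + c1p ≤ a + b + c),
      ← Finset.sum_Ico_consecutive _ (Nat.zero_le (a + b)) (by omega : a + b ≤ a + b + c1p),
      ← Finset.sum_Ico_consecutive _ (Nat.zero_le (a + bp)) (by omega : a + bp ≤ a + b),
      ← Finset.sum_Ico_consecutive _ (Nat.zero_le a) (by omega : a ≤ a + bp),
      ← Finset.sum_Ico_consecutive _ (Nat.zero_le ap) (by omega : ap ≤ a),
      sumIco' _ 0 ap (1 * 1) (fun m h1 h2 => by
        rw [if_pos (by omega), if_pos (by omega)]),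
      sumIco' _ ap a (1 * (-1)) (fun m h1 h2 => by
        rw [if_pos (by omega), if_neg (by omega)]),
      sumIco' _ a (a + bp) ((-1) * 1) (fun m h1 h2 => by
        rw [if_neg (by omega), if_pos (by omega), if_pos (by omega)]),
      sumIco' _ (a + bp) (a + b) ((-1) * (-1)) (fun m h1 h2 => by
        rw [if_neg (by omega), if_pos (by omega), if_neg (by omega)]),
      sumIco' _ (a + b) (a + b + c1p) ((r * 1) * 1) (fun m h1 h2 => by
        rw [if_neg (by omega), if_neg (by omega), if_pos (by omega), if_pos (by omega)]),
      sumIco' _ (a + b + c1p) (a + b + c) ((r * 1) * (-1)) (fun m h1 h2 => by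
        rw [if_neg (by omega), if_neg (by omega), if_pos (by omega), if_neg (by omega)]),
      sumIco' _ (a + b + c) (a + b + c + c2p) ((r * (-1)) * 1) (fun m h1 h2 => by
        rw [if_neg (by omega), if_neg (by omega), if_neg (by omega), if_pos (by omega)]),
      sumIco' _ (a + b + c + c2p) n ((r * (-1)) * (-1)) (fun m h1 h2 => by
        rw [if_neg (by omega), if_neg (by omega), if_neg (by omega), if_neg (by omega)]),
      show ap - 0 = ap from rfl, show a + bp - a = bp by omega,
      show a + b - (a + bp) = b - bp by omega,
      show a + b + c1p - (a + b) = c1p by omega,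
      show a + b + c - (a + b + c1p) = c - c1p by omega,
      show a + b + c + c2p - (a + b + c) = c2p by omega,
      show n - (a + b + c + c2p) = c - c2p by omega,
      Nat.cast_sub hapa, Nat.cast_sub hbpb, Nat.cast_sub hc1pc, Nat.cast_sub hc2pc]
    linear_combination 2 * A1 - A2 + 2 * r * A3 - r * A4
  -- the entrywise product identity
  have key : ∀ (ii jj : ℕ), ∑ m ∈ Finset.range n,
      ((1 / (k:ℝ)) * (if m < a then 1 else if m < a + b then -1
        else (if ii < ap ∨ (a ≤ ii ∧ ii < a + bp) ∨ (a + b ≤ ii ∧ ii < a + b + c1p) ∨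
            (a + b + c ≤ ii ∧ ii < a + b + c + c2p) then 1 else -1) *
          (if m < a + b + c then 1 else -1))) *
      ((1 / (k:ℝ)) * (if jj < a then 1 else if jj < a + b then -1
        else (if m < ap ∨ (a ≤ m ∧ m < a + bp) ∨ (a + b ≤ m ∧ m < a + b + c1p) ∨
            (a + b + c ≤ m ∧ m < a + b + c + c2p) then (1:ℝ) else -1) *
          (if jj < a + b + c then 1 else -1)))
      = (1 / (k:ℝ)) * (if jj < a then 1 else if jj < a + b then -1
        else (if ii < ap ∨ (a ≤ ii ∧ ii < a + bp) ∨ (a + b ≤ ii ∧ ii < a + b + c1p) ∨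
            (a + b + c ≤ ii ∧ ii < a + b + c + c2p) then 1 else -1) *
          (if jj < a + b + c then 1 else -1)) := by
    intro ii jj
    set r : ℝ := (if ii < ap ∨ (a ≤ ii ∧ ii < a + bp) ∨ (a + b ≤ ii ∧ ii < a + b + c1p) ∨
        (a + b + c ≤ ii ∧ ii < a + b + c + c2p) then 1 else -1) with hr
    by_cases hj1 : jj < a
    · simp only [if_pos hj1]
      have e : ∀ m ∈ Finset.range n,
          (1 / (k:ℝ) * (if m < a then (1:ℝ) else if m < a + b then -1
            else r * (if m < a + b + c then 1 else -1))) * (1 / (k:ℝ) * 1)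
          = (1 / (k:ℝ) * (1 / (k:ℝ))) * (if m < a then (1:ℝ) else if m < a + b then -1
            else r * (if m < a + b + c then 1 else -1)) := fun m _ => by ring
      rw [Finset.sum_congr rfl e, ← Finset.mul_sum, S0 r]
      field_simp
    · by_cases hj2 : jj < a + b
      · simp only [if_neg hj1, if_pos hj2]
        have e : ∀ m ∈ Finset.range n,
            (1 / (k:ℝ) * (if m < a then (1:ℝ) else if m < a + b then -1
              else r * (if m < a + b + c then 1 else -1))) * (1 / (k:ℝ) * (-1))
            = (-(1 / (k:ℝ) * (1 / (k:ℝ)))) * (if m < a then (1:ℝ) else if m < a + b then -1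
              else r * (if m < a + b + c then 1 else -1)) := fun m _ => by ring
        rw [Finset.sum_congr rfl e, ← Finset.mul_sum, S0 r]
        field_simp
      · simp only [if_neg hj1, if_neg hj2]
        set cj : ℝ := (if jj < a + b + c then (1:ℝ) else -1) with hcj
        have e : ∀ m ∈ Finset.range n,
            (1 / (k:ℝ) * (if m < a then (1:ℝ) else if m < a + b then -1
              else r * (if m < a + b + c then 1 else -1))) *
            (1 / (k:ℝ) * ((if m < ap ∨ (a ≤ m ∧ m < a + bp) ∨ (a + b ≤ m ∧ m < a + b + c1p) ∨
                (a + b + c ≤ m ∧ m < a + b + c + c2p) then (1:ℝ) else -1) * cj))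
            = ((1 / (k:ℝ) * (1 / (k:ℝ))) * cj) *
              ((if m < a then (1:ℝ) else if m < a + b then -1
                else r * (if m < a + b + c then 1 else -1)) *
               (if m < ap ∨ (a ≤ m ∧ m < a + bp) ∨ (a + b ≤ m ∧ m < a + b + c1p) ∨
                (a + b + c ≤ m ∧ m < a + b + c + c2p) then (1:ℝ) else -1)) := fun m _ => by ring
        rw [Finset.sum_congr rfl e, ← Finset.mul_sum, S1 r]
        field_simp
  -- idempotency
  have hAA : A * A = A := by
    ext i j
    rw [hA, Matrix.mul_apply]
    simp only [Matrix.of_apply]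
    exact (Fin.sum_univ_eq_sum_range (fun m =>
        ((1 / (k:ℝ)) * (if m < a then 1 else if m < a + b then -1
          else (if (i:ℕ) < ap ∨ (a ≤ (i:ℕ) ∧ (i:ℕ) < a + bp) ∨ (a + b ≤ (i:ℕ) ∧ (i:ℕ) < a + b + c1p) ∨
              (a + b + c ≤ (i:ℕ) ∧ (i:ℕ) < a + b + c + c2p) then 1 else -1) *
            (if m < a + b + c then 1 else -1))) *
        ((1 / (k:ℝ)) * (if (j:ℕ) < a then 1 else if (j:ℕ) < a + b then -1
          else (if m < ap ∨ (a ≤ m ∧ m < a + bp) ∨ (a + b ≤ m ∧ m < a + b + c1p) ∨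
              (a + b + c ≤ m ∧ m < a + b + c + c2p) then (1:ℝ) else -1) *
            (if (j:ℕ) < a + b + c then 1 else -1)))) n).trans (key i j)
  refine ⟨hAA, ?_, ?_⟩
  · -- rank
    have hup : A.rank ≤ 2 := by
      set B : Matrix (Fin n) (Fin 2) ℝ := Matrix.of fun i t =>
        if t = 0 then (1 : ℝ) else
          (if (i : ℕ) < ap ∨ (a ≤ (i : ℕ) ∧ (i : ℕ) < a + bp) ∨
              (a + b ≤ (i : ℕ) ∧ (i : ℕ) < a + b + c1p) ∨
              (a + b + c ≤ (i : ℕ) ∧ (i : ℕ) < a + b + c + c2p) then 1 else -1) with hB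
      set C : Matrix (Fin 2) (Fin n) ℝ := Matrix.of fun t j =>
        if t = 0 then (1 / k : ℝ) * (if (j : ℕ) < a then 1 else if (j : ℕ) < a + b then -1 else 0)
        else (1 / k : ℝ) * (if (j : ℕ) < a + b then 0 else (if (j : ℕ) < a + b + c then 1 else -1)) with hC
      have hfac : A = B * C := by
        ext i j
        rw [hA, Matrix.mul_apply, Fin.sum_univ_two]
        simp only [Matrix.of_apply, hB, hC]
        norm_num
        split_ifs <;> first | ring1 | (exfalso; omega)
      calc A.rank = (B * C).rank := by rw [hfac]
        _ ≤ B.rank := Matrix.rank_mul_le_left B C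
        _ ≤ 2 := le_trans (Matrix.rank_le_card_width B) (by simp)
    have hn0 : 0 < n := by omega
    have hjc : a + b < n := by omega
    have hiap : ap < n := by omega
    set j0 : Fin n := ⟨0, hn0⟩
    set jc : Fin n := ⟨a + b, hjc⟩
    set i0 : Fin n := ⟨0, hn0⟩
    set iap : Fin n := ⟨ap, hiap⟩
    have hA00 : A i0 j0 = 1 / k := by
      rw [hA]; simp only [Matrix.of_apply]
      rw [if_pos (show ((j0 : ℕ)) < a by simp [j0]; omega)]; ring
    have hA0c : A i0 jc = 1 / k := by
      rw [hA]; simp only [Matrix.of_apply]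
      rw [if_neg (show ¬((jc : ℕ)) < a by simp [jc]),
        if_neg (show ¬((jc : ℕ)) < a + b by simp [jc]),
        if_pos (show ((i0 : ℕ)) < ap ∨ _ ∨ _ ∨ _ from Or.inl (by simp [i0]; omega)),
        if_pos (show ((jc : ℕ)) < a + b + c by simp [jc]; omega)]
      ring
    have hAa0 : A iap j0 = 1 / k := by
      rw [hA]; simp only [Matrix.of_apply]
      rw [if_pos (show ((j0 : ℕ)) < a by simp [j0]; omega)]; ring
    have hAac : A iap jc = -(1 / k) := by
      rw [hA]; simp only [Matrix.of_apply]
      rw [if_neg (show ¬((jc : ℕ)) < a by simp [jc]),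
        if_neg (show ¬((jc : ℕ)) < a + b by simp [jc]),
        if_neg (show ¬(((iap : ℕ)) < ap ∨ (a ≤ (iap:ℕ) ∧ (iap:ℕ) < a + bp) ∨
          (a + b ≤ (iap:ℕ) ∧ (iap:ℕ) < a + b + c1p) ∨
          (a + b + c ≤ (iap:ℕ) ∧ (iap:ℕ) < a + b + c + c2p)) by simp [iap]; omega),
        if_pos (show ((jc : ℕ)) < a + b + c by simp [jc]; omega)]
      ring
    have hli : LinearIndependent ℝ ![Aᵀ j0, Aᵀ jc] := by
      rw [LinearIndependent.pair_iff]
      intro s t hst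
      have e1 := congrFun hst i0
      have e2 := congrFun hst iap
      simp only [Pi.add_apply, Pi.smul_apply, Pi.zero_apply, smul_eq_mul,
        Matrix.transpose_apply] at e1 e2
      rw [hA00, hA0c] at e1
      rw [hAa0, hAac] at e2
      have hk1 : s + t = 0 := by field_simp at e1; linarith
      have hk2 : s - t = 0 := by field_simp at e2; linarith
      constructor <;> linarith
    have hlow : 2 ≤ A.rank := by
      rw [Matrix.rank]
      have hsp : Submodule.span ℝ (Set.range ![Aᵀ j0, Aᵀ jc]) ≤ LinearMap.range A.mulVecLin := by
        rw [Submodule.span_le]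
        rintro x ⟨t, rfl⟩
        fin_cases t
        · exact ⟨Pi.single j0 1, Matrix.mulVec_single_one A j0⟩
        · exact ⟨Pi.single jc 1, Matrix.mulVec_single_one A jc⟩
      have := Submodule.finrank_mono hsp
      rwa [finrank_span_eq_card hli, Fintype.card_fin] at this
    omega
  · -- entries
    intro i j
    rw [hA]; simp only [Matrix.of_apply]
    split_ifs <;> first | (left; ring1) | (right; ring1)
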